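/- Diagonal case of the separation identity: for distinct λ_1, ..., λ_g and 1 ≤ n ≤ g, the total derivative satisfies d/dλ_k [β_n'(λ_k)/β'(λ_k)] = (1/2) β_n''(λ_k)/β'(λ_k) - (1/2) β_n'(λ_k) β''(λ_k)/β'(λ_k)², where β(λ) = ∏_{l=1}^g (λ - λ_l), β_n(λ) is its degree-n truncation, and the total derivative in λ_k accounts for both the dependence of the coefficients β_1,...,β_n on λ_k and the evaluation point λ = λ_k. -/

import Mathlib

/-- `β(λ) = ∏_{l} (λ - λ_l)` with the roots `λ_l` indeterminates. -/
noncomputable def betaP (F : Type*) [Field F] (g : ℕ) :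
    Polynomial (MvPolynomial (Fin g) F) :=
  ∏ l : Fin g, (Polynomial.X - Polynomial.C (MvPolynomial.X l))

/-- The truncation `β_n(λ) = λ^n + β_1 λ^{n-1} + ⋯ + β_n`. -/
noncomputable def betaTrunc (F : Type*) [Field F] (g n : ℕ) :
    Polynomial (MvPolynomial (Fin g) F) :=
  ∑ m ∈ Finset.range (n + 1),
    Polynomial.C ((betaP F g).coeff (g - m)) * Polynomial.X ^ (n - m)

/-- The canonical map into the field of rational functions of the roots. -/
noncomputable def toFrac (F : Type*) [Field F] (g : ℕ) :
    MvPolynomial (Fin g) F →+* FractionRing (MvPolynomial (Fin g) F) :=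
  algebraMap (MvPolynomial (Fin g) F) (FractionRing (MvPolynomial (Fin g) F))

section Aux

open Polynomial MvPolynomial

set_option linter.unusedSectionVars false

variable {F : Type*} [Field F] [CharZero F] {g : ℕ} (k : Fin g)

/-- coeffs killed closed under mul -/
lemma coeff_mul_killed {p q : Polynomial (MvPolynomial (Fin g) F)}
    (hp : ∀ i, pderiv k (p.coeff i) = 0) (hq : ∀ i, pderiv k (q.coeff i) = 0) :
    ∀ i, pderiv k ((p * q).coeff i) = 0 := by
  intro i
  rw [Polynomial.coeff_mul, map_sum]
  refine Finset.sum_eq_zero fun x _ => ?_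
  rw [Derivation.leibniz, hp, hq]
  simp

lemma gamma_coeff_killed (s : Finset (Fin g)) (hk : k ∉ s) :
    ∀ i, pderiv k (((∏ l ∈ s, (Polynomial.X - Polynomial.C (MvPolynomial.X l)) : Polynomial (MvPolynomial (Fin g) F))).coeff i) = 0 := by
  classical
  induction s using Finset.induction_on with
  | empty => intro i; rcases i with _ | i <;> simp [Polynomial.coeff_one]
  | insert a s' hx ih =>
    rw [Finset.prod_insert hx]
    refine coeff_mul_killed k ?_ (ih (fun h => hk (Finset.mem_insert_of_mem h)))
    intro i
    have hak : a ≠ k := fun h => hk (h ▸ Finset.mem_insert_self a s')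
    rcases i with _ | _ | i <;>
      simp [Polynomial.coeff_sub, pderiv_X_of_ne hak, Polynomial.coeff_one, Polynomial.coeff_X]

/-- chain rule with constant coefficients -/
lemma pderiv_eval_killed (T : Polynomial (MvPolynomial (Fin g) F))
    (hT : ∀ i, pderiv k (T.coeff i) = 0) :
    pderiv k (T.eval (MvPolynomial.X k)) = (Polynomial.derivative T).eval (MvPolynomial.X k) := by
  rw [Polynomial.eval_eq_sum, Polynomial.derivative_eval, Polynomial.sum, Polynomial.sum, map_sum]
  refine Finset.sum_congr rfl fun i _ => ?_
  rw [Derivation.leibniz, hT]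
  cases i with
  | zero => simp
  | succ m =>
    rw [Derivation.leibniz_pow]
    simp [pderiv_X_self, mul_comm, mul_assoc, mul_left_comm]

lemma key (P T : Polynomial (MvPolynomial (Fin g) F)) (c : MvPolynomial (Fin g) F)
    (hP : P = (Polynomial.X - Polynomial.C (MvPolynomial.X k)) * T + Polynomial.C c)
    (hT : ∀ i, pderiv k (T.coeff i) = 0) :
    2 * pderiv k ((Polynomial.derivative P).eval (MvPolynomial.X k)) =
      (Polynomial.derivative (Polynomial.derivative P)).eval (MvPolynomial.X k) := by
  subst hP
  have hT' : ∀ i, pderiv k ((Polynomial.derivative T).coeff i) = 0 := by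
    intro i
    rw [Polynomial.coeff_derivative, Derivation.leibniz, hT]
    simp
  have h1 : (Polynomial.derivative
      ((Polynomial.X - Polynomial.C (MvPolynomial.X k)) * T + Polynomial.C c)).eval
      (MvPolynomial.X k) = T.eval (MvPolynomial.X k) := by
    simp [Polynomial.derivative_mul]
  have h2 : (Polynomial.derivative (Polynomial.derivative
      ((Polynomial.X - Polynomial.C (MvPolynomial.X k)) * T + Polynomial.C c))).eval
      (MvPolynomial.X k) = 2 * (Polynomial.derivative T).eval (MvPolynomial.X k) := by
    simp [Polynomial.derivative_mul]
    ring
  rw [h1, h2, pderiv_eval_killed k T hT]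

lemma betaP_eq : betaP F g =
    (Polynomial.X - Polynomial.C (MvPolynomial.X k)) *
      ∏ l ∈ Finset.univ.erase k, (Polynomial.X - Polynomial.C (MvPolynomial.X l)) := by
  rw [betaP, ← Finset.mul_prod_erase _ _ (Finset.mem_univ k)]

lemma prod_monic_coeff (s : Finset (Fin g)) :
    ((∏ l ∈ s, (Polynomial.X - Polynomial.C (MvPolynomial.X l)) :
      Polynomial (MvPolynomial (Fin g) F))).coeff s.card = 1 := by
  have hm : ((∏ l ∈ s, (Polynomial.X - Polynomial.C (MvPolynomial.X l)) :
      Polynomial (MvPolynomial (Fin g) F))).Monic :=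
    Polynomial.monic_prod_of_monic _ _ fun l _ => Polynomial.monic_X_sub_C _
  have hd : ((∏ l ∈ s, (Polynomial.X - Polynomial.C (MvPolynomial.X l)) :
      Polynomial (MvPolynomial (Fin g) F))).natDegree = s.card := by
    rw [Polynomial.natDegree_prod_of_monic _ _ fun l _ => Polynomial.monic_X_sub_C _]
    simp
  have := hm.coeff_natDegree
  rwa [hd] at this

lemma betaP_coeff_succ (j : ℕ) :
    (betaP F g).coeff (j + 1) =
      (∏ l ∈ Finset.univ.erase k, (Polynomial.X - Polynomial.C (MvPolynomial.X l)) :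
        Polynomial (MvPolynomial (Fin g) F)).coeff j -
      MvPolynomial.X k *
        (∏ l ∈ Finset.univ.erase k, (Polynomial.X - Polynomial.C (MvPolynomial.X l)) :
          Polynomial (MvPolynomial (Fin g) F)).coeff (j + 1) := by
  rw [betaP_eq k, sub_mul, Polynomial.coeff_sub, Polynomial.coeff_X_mul,
    Polynomial.coeff_C_mul]

lemma betaTrunc_succ (n : ℕ) :
    betaTrunc F g (n + 1) = Polynomial.X * betaTrunc F g n +
      Polynomial.C ((betaP F g).coeff (g - (n + 1))) := by
  rw [betaTrunc, betaTrunc, Finset.sum_range_succ, Finset.mul_sum]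
  refine congrArg₂ (· + ·) ?_ ?_
  · refine Finset.sum_congr rfl fun m hm => ?_
    have hmn : m ≤ n := Nat.lt_succ_iff.mp (Finset.mem_range.mp hm)
    have : n + 1 - m = (n - m) + 1 := by omega
    rw [this, pow_succ]
    ring
  · simp

lemma decomp (n : ℕ) (hn1 : 1 ≤ n) (hng : n ≤ g) :
    ∃ T c, betaTrunc F g n = (Polynomial.X - Polynomial.C (MvPolynomial.X k)) * T +
        Polynomial.C c ∧ (∀ i, pderiv k (T.coeff i) = 0) ∧
      (n < g → c = (∏ l ∈ Finset.univ.erase k,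
        (Polynomial.X - Polynomial.C (MvPolynomial.X l)) :
          Polynomial (MvPolynomial (Fin g) F)).coeff (g - 1 - n)) := by
  set γ : Polynomial (MvPolynomial (Fin g) F) :=
    ∏ l ∈ Finset.univ.erase k, (Polynomial.X - Polynomial.C (MvPolynomial.X l)) with hγ
  induction n with
  | zero => omega
  | succ n ih =>
    rcases Nat.eq_zero_or_pos n with h0 | hpos
    · -- base case n+1 = 1
      subst h0
      refine ⟨1, MvPolynomial.X k + (betaP F g).coeff (g - 1), ?_, ?_, ?_⟩
      · rw [betaTrunc]
        have hg1 : g ≥ 1 := hng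
        have hcg : (betaP F g).coeff (g - 0) = 1 := by
          have := prod_monic_coeff (F := F) (Finset.univ : Finset (Fin g))
          simpa [betaP, Finset.card_univ] using this
        rw [Finset.sum_range_succ, Finset.sum_range_one]
        rw [hcg]
        simp only [Nat.sub_zero, Nat.sub_self, pow_zero, pow_one, map_add, one_mul, mul_one,
          map_one]
        ring
      · intro i; rcases i with _ | i <;> simp [Polynomial.coeff_one]
      · intro hg
        have h2 : 2 ≤ g := hg
        have hj : g - 1 = (g - 2) + 1 := by omega
        rw [hj, betaP_coeff_succ k (g - 2)]
        have hγ1 : γ.coeff (g - 2 + 1) = 1 := by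
          have := prod_monic_coeff (F := F) (Finset.univ.erase k)
          rw [Finset.card_erase_of_mem (Finset.mem_univ k), Finset.card_univ, Fintype.card_fin]
            at this
          rw [← hγ] at this
          have : γ.coeff (g - 1) = 1 := this
          rwa [hj] at this
        rw [hγ1, mul_one]
        have e : g - 2 + 1 - (0 + 1) = g - 2 := by omega
        rw [e, ← hγ]
        ring
    · -- inductive step
      obtain ⟨T, c, hEq, hT, hc⟩ := ih hpos (le_of_lt (Nat.lt_of_succ_le hng))
      have hclt : c = γ.coeff (g - 1 - n) := hc (Nat.lt_of_succ_le hng)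
      have hcpd : pderiv k c = 0 := by rw [hclt]; exact gamma_coeff_killed k _ (by simp) _
      refine ⟨Polynomial.X * T + Polynomial.C c,
        MvPolynomial.X k * c + (betaP F g).coeff (g - (n + 1)), ?_, ?_, ?_⟩
      · rw [betaTrunc_succ, hEq, map_add, map_mul]
        ring
      · intro i
        rcases i with _ | i
        · simpa [Polynomial.mul_coeff_zero] using hcpd
        · simp [Polynomial.coeff_X_mul, hT i]
      · intro hg
        have hj : g - (n + 1) = (g - n - 2) + 1 := by omega
        rw [hj, betaP_coeff_succ k (g - n - 2), hclt]
        have e1 : g - n - 2 + 1 = g - 1 - n := by omega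
        have e2 : g - 1 - (n + 1) = g - n - 2 := by omega
        rw [e1, e2]
        ring


end Aux

/-- the diagonal case of the separation identity: for `1 ≤ n ≤ g`,
`d/dλ_k [β_n'(λ_k)/β'(λ_k)] = (1/2) β_n''(λ_k)/β'(λ_k) - (1/2) β_n'(λ_k) β''(λ_k)/β'(λ_k)²`,
the total derivative on the left written via the quotient rule (the total `∂/∂λ_k`,
through both coefficients and evaluation point, is `MvPolynomial.pderiv k` applied
to the evaluated expressions). -/
theorem separation_identity_diag (F : Type*) [Field F] [CharZero F] (g n : ℕ)
    (hn1 : 1 ≤ n) (hng : n ≤ g) (k : Fin g) :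
    (toFrac F g (MvPolynomial.pderiv k
          ((Polynomial.derivative (betaTrunc F g n)).eval (MvPolynomial.X k))) *
        toFrac F g ((Polynomial.derivative (betaP F g)).eval (MvPolynomial.X k)) -
      toFrac F g ((Polynomial.derivative (betaTrunc F g n)).eval (MvPolynomial.X k)) *
        toFrac F g (MvPolynomial.pderiv k
          ((Polynomial.derivative (betaP F g)).eval (MvPolynomial.X k)))) /
      (toFrac F g ((Polynomial.derivative (betaP F g)).eval (MvPolynomial.X k))) ^ 2 =
    (2 : FractionRing (MvPolynomial (Fin g) F))⁻¹ *
        toFrac F g ((Polynomial.derivative (Polynomial.derivative (betaTrunc F g n))).eval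
          (MvPolynomial.X k)) /
        toFrac F g ((Polynomial.derivative (betaP F g)).eval (MvPolynomial.X k)) -
      (2 : FractionRing (MvPolynomial (Fin g) F))⁻¹ *
        toFrac F g ((Polynomial.derivative (betaTrunc F g n)).eval (MvPolynomial.X k)) *
        toFrac F g ((Polynomial.derivative (Polynomial.derivative (betaP F g))).eval
          (MvPolynomial.X k)) /
        (toFrac F g ((Polynomial.derivative (betaP F g)).eval (MvPolynomial.X k))) ^ 2 := by
  have hTγ := gamma_coeff_killed (F := F) k (Finset.univ.erase k) (by simp)
  have hB := key k (betaP F g) _ 0 (by rw [betaP_eq k]; simp) hTγ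
  obtain ⟨T, c, hEq, hT, _⟩ := decomp (F := F) k n hn1 hng
  have hN := key k (betaTrunc F g n) T c hEq hT
  have hB' := congrArg (toFrac F g) hB
  have hN' := congrArg (toFrac F g) hN
  rw [map_mul, map_ofNat] at hB' hN'
  set a := toFrac F g (MvPolynomial.pderiv k
    ((Polynomial.derivative (betaTrunc F g n)).eval (MvPolynomial.X k)))
  set d := toFrac F g ((Polynomial.derivative (betaP F g)).eval (MvPolynomial.X k))
  set e := toFrac F g ((Polynomial.derivative (betaTrunc F g n)).eval (MvPolynomial.X k))
  set q := toFrac F g (MvPolynomial.pderiv k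
    ((Polynomial.derivative (betaP F g)).eval (MvPolynomial.X k)))
  set P2 := toFrac F g ((Polynomial.derivative (Polynomial.derivative (betaTrunc F g n))).eval
    (MvPolynomial.X k))
  set Q2 := toFrac F g ((Polynomial.derivative (Polynomial.derivative (betaP F g))).eval
    (MvPolynomial.X k))
  rcases eq_or_ne d 0 with hd | hd
  · simp [hd]
  · have h2 : (2 : FractionRing (MvPolynomial (Fin g) F)) ≠ 0 := two_ne_zero
    field_simp
    linear_combination d * hN' - e * hB'
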